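/- Let W ∈ ℝ^{n×n} be symmetric doubly stochastic, let η ∈ (0,1], and set W_η := I − η(I − W). Let ω ≥ 0, and let X, Y, H, X̃ be square-integrable random n×m matrices with E[‖X − X̃‖²] ≤ ω·E[‖X − H‖²]. Set X⁺ := W_η·X − η·Y + η(I − W)(X − X̃). Then E[‖X⁺ − X‖²] ≤ 12·E[‖X − X̄‖²] + 3η²·E[‖Y‖²] + 12η²ω·E[‖X − H‖²]. -/
import Mathlib


open MeasureTheory Finset

/-- Squared Frobenius norm of a real matrix. -/
def frobSq {n m : ℕ} (M : Matrix (Fin n) (Fin m) ℝ) : ℝ := ∑ i, ∑ j, (M i j) ^ 2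

/-- The matrix each of whose rows is the average of the rows of `M`. -/
noncomputable def rowAvg {n m : ℕ} (M : Matrix (Fin n) (Fin m) ℝ) :
    Matrix (Fin n) (Fin m) ℝ :=
  Matrix.of fun _ j => (n : ℝ)⁻¹ * ∑ i, M i j

lemma frobSq_nonneg {n m : ℕ} (M : Matrix (Fin n) (Fin m) ℝ) : 0 ≤ frobSq M := by
  unfold frobSq
  positivity

/-- Weighted Cauchy–Schwarz / Jensen for squares. -/
lemma weighted_sq_le {k : ℕ} (w v : Fin k → ℝ) (hw : ∀ i, 0 ≤ w i)
    (hsum : ∑ i, w i = 1) : (∑ i, w i * v i) ^ 2 ≤ ∑ i, w i * v i ^ 2 := by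
  have h := Finset.sum_mul_sq_le_sq_mul_sq Finset.univ
    (fun i => Real.sqrt (w i)) (fun i => Real.sqrt (w i) * v i)
  have h1 : ∀ i : Fin k, Real.sqrt (w i) * (Real.sqrt (w i) * v i) = w i * v i := by
    intro i
    rw [← mul_assoc, Real.mul_self_sqrt (hw i)]
  have h2 : ∀ i : Fin k, Real.sqrt (w i) ^ 2 = w i := fun i => Real.sq_sqrt (hw i)
  have h3 : ∀ i : Fin k, (Real.sqrt (w i) * v i) ^ 2 = w i * v i ^ 2 := by
    intro i; rw [mul_pow, h2]
  calc (∑ i, w i * v i) ^ 2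
      = (∑ i, Real.sqrt (w i) * (Real.sqrt (w i) * v i)) ^ 2 := by
        simp only [h1]
    _ ≤ (∑ i, Real.sqrt (w i) ^ 2) * ∑ i, (Real.sqrt (w i) * v i) ^ 2 := h
    _ = (∑ i, w i) * ∑ i, w i * v i ^ 2 := by simp only [h2, h3]
    _ = ∑ i, w i * v i ^ 2 := by rw [hsum, one_mul]

lemma frobSq_smul {n m : ℕ} (c : ℝ) (M : Matrix (Fin n) (Fin m) ℝ) :
    frobSq (c • M) = c ^ 2 * frobSq M := by
  unfold frobSq
  simp only [Matrix.smul_apply, smul_eq_mul, mul_pow, Finset.mul_sum]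

lemma frobSq_sub_le {n m : ℕ} (A B : Matrix (Fin n) (Fin m) ℝ) :
    frobSq (A - B) ≤ 2 * frobSq A + 2 * frobSq B := by
  unfold frobSq
  simp only [Finset.mul_sum, ← Finset.sum_add_distrib]
  apply Finset.sum_le_sum
  intro i _
  apply Finset.sum_le_sum
  intro j _
  have : (A i j - B i j) ^ 2 ≤ 2 * A i j ^ 2 + 2 * B i j ^ 2 := by nlinarith [sq_nonneg (A i j + B i j)]
  simpa using this

lemma frobSq_add3_le {n m : ℕ} (A B C : Matrix (Fin n) (Fin m) ℝ) :
    frobSq (A + B + C) ≤ 3 * frobSq A + 3 * frobSq B + 3 * frobSq C := by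
  unfold frobSq
  simp only [Finset.mul_sum, ← Finset.sum_add_distrib]
  apply Finset.sum_le_sum
  intro i _
  apply Finset.sum_le_sum
  intro j _
  have : (A i j + B i j + C i j) ^ 2 ≤ 3 * A i j ^ 2 + 3 * B i j ^ 2 + 3 * C i j ^ 2 := by
    nlinarith [sq_nonneg (A i j - B i j), sq_nonneg (A i j - C i j), sq_nonneg (B i j - C i j)]
  simpa using this

lemma frobSq_W_mul {n m : ℕ} (W : Matrix (Fin n) (Fin n) ℝ)
    (hWnn : ∀ i j, 0 ≤ W i j) (hWrow : ∀ i, ∑ j, W i j = 1)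
    (hWcol : ∀ j, ∑ i, W i j = 1) (M : Matrix (Fin n) (Fin m) ℝ) :
    frobSq (W * M) ≤ frobSq M := by
  unfold frobSq
  have key : ∀ i j, (W * M) i j ^ 2 ≤ ∑ k, W i k * M k j ^ 2 := by
    intro i j
    have := weighted_sq_le (fun k => W i k) (fun k => M k j) (hWnn i) (hWrow i)
    simpa [Matrix.mul_apply] using this
  calc ∑ i, ∑ j, (W * M) i j ^ 2
      ≤ ∑ i, ∑ j, ∑ k, W i k * M k j ^ 2 := by
        apply Finset.sum_le_sum; intro i _
        apply Finset.sum_le_sum; intro j _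
        exact key i j
    _ = ∑ j, ∑ i, ∑ k, W i k * M k j ^ 2 := by rw [Finset.sum_comm]
    _ = ∑ j, ∑ k, ∑ i, W i k * M k j ^ 2 := by
        refine Finset.sum_congr rfl fun j _ => ?_
        rw [Finset.sum_comm]
    _ = ∑ j, ∑ k, (∑ i, W i k) * M k j ^ 2 := by
        refine Finset.sum_congr rfl fun j _ => Finset.sum_congr rfl fun k _ => ?_
        rw [Finset.sum_mul]
    _ = ∑ j, ∑ k, M k j ^ 2 := by simp [hWcol]
    _ = ∑ k, ∑ j, M k j ^ 2 := by rw [Finset.sum_comm]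

lemma frobSq_oneSubW_mul {n m : ℕ} (W : Matrix (Fin n) (Fin n) ℝ)
    (hWnn : ∀ i j, 0 ≤ W i j) (hWrow : ∀ i, ∑ j, W i j = 1)
    (hWcol : ∀ j, ∑ i, W i j = 1) (M : Matrix (Fin n) (Fin m) ℝ) :
    frobSq ((1 - W) * M) ≤ 4 * frobSq M := by
  have h1 : (1 - W) * M = M - W * M := by
    rw [Matrix.sub_mul, Matrix.one_mul]
  rw [h1]
  calc frobSq (M - W * M) ≤ 2 * frobSq M + 2 * frobSq (W * M) := frobSq_sub_le _ _
    _ ≤ 2 * frobSq M + 2 * frobSq M := by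
        have := frobSq_W_mul W hWnn hWrow hWcol M
        linarith
    _ = 4 * frobSq M := by ring

lemma oneSubW_mul_rowAvg {n m : ℕ} (W : Matrix (Fin n) (Fin n) ℝ)
    (hWrow : ∀ i, ∑ j, W i j = 1) (M : Matrix (Fin n) (Fin m) ℝ) :
    (1 - W) * rowAvg M = 0 := by
  ext i j
  rw [Matrix.sub_mul, Matrix.one_mul]
  simp only [Matrix.sub_apply, Matrix.mul_apply, rowAvg, Matrix.of_apply, Matrix.zero_apply]
  rw [← Finset.sum_mul, hWrow, one_mul, sub_self]

lemma frobSq_rowAvg_le {n m : ℕ} (hn : 0 < n) (M : Matrix (Fin n) (Fin m) ℝ) :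
    frobSq (rowAvg M) ≤ frobSq M := by
  have hw : ∀ i : Fin n, (0 : ℝ) ≤ (n : ℝ)⁻¹ := fun _ => by positivity
  have hsum : ∑ _i : Fin n, (n : ℝ)⁻¹ = 1 := by
    rw [Finset.sum_const, Finset.card_univ, Fintype.card_fin, nsmul_eq_mul]
    field_simp
  have key : ∀ j, ((n : ℝ)⁻¹ * ∑ k, M k j) ^ 2 ≤ ∑ k, (n : ℝ)⁻¹ * M k j ^ 2 := by
    intro j
    have := weighted_sq_le (fun _ : Fin n => (n : ℝ)⁻¹) (fun k => M k j) hw hsum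
    simpa [Finset.mul_sum] using this
  unfold frobSq rowAvg
  calc ∑ i : Fin n, ∑ j, ((n : ℝ)⁻¹ * ∑ k, M k j) ^ 2
      ≤ ∑ _i : Fin n, ∑ j, ∑ k, (n : ℝ)⁻¹ * M k j ^ 2 := by
        apply Finset.sum_le_sum; intro i _
        apply Finset.sum_le_sum; intro j _
        exact key j
    _ = (n : ℝ) * ((n : ℝ)⁻¹ * ∑ j, ∑ k, M k j ^ 2) := by
        rw [Finset.sum_const, Finset.card_univ, Fintype.card_fin, nsmul_eq_mul]
        congr 1
        rw [Finset.mul_sum]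
        refine Finset.sum_congr rfl fun j _ => ?_
        rw [Finset.mul_sum]
    _ = ∑ j, ∑ k, M k j ^ 2 := by
        rw [← mul_assoc, mul_inv_cancel₀ (by positivity : (n:ℝ) ≠ 0), one_mul]
    _ = ∑ k, ∑ j, M k j ^ 2 := by rw [Finset.sum_comm]

/-- One-step drift bound for the compressed decision variable:
with `W_η = I − η(I − W)`, `η ∈ (0,1]`, compression error
`E‖X − X̃‖² ≤ ω E‖X − H‖²`, and `X⁺ = W_η X − η Y + η (I − W)(X − X̃)`:
`E‖X⁺ − X‖² ≤ 12 E‖X − X̄‖² + 3 η² E‖Y‖² + 12 η² ω E‖X − H‖²`. -/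
theorem statement14 {n m : ℕ} (hn : 0 < n)
    {Ω : Type*} [MeasurableSpace Ω] (P : Measure Ω) [IsProbabilityMeasure P]
    (W : Matrix (Fin n) (Fin n) ℝ)
    (hWnn : ∀ i j, 0 ≤ W i j) (hWsymm : W.transpose = W)
    (hWrow : ∀ i, ∑ j, W i j = 1)
    (η : ℝ) (hη0 : 0 < η) (hη1 : η ≤ 1)
    (ωc : ℝ) (hωc : 0 ≤ ωc)
    (X Y H Xtil : Ω → Matrix (Fin n) (Fin m) ℝ)
    (hXmeas : ∀ i j, Measurable fun ω => X ω i j)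
    (hYmeas : ∀ i j, Measurable fun ω => Y ω i j)
    (hHmeas : ∀ i j, Measurable fun ω => H ω i j)
    (hXtmeas : ∀ i j, Measurable fun ω => Xtil ω i j)
    (hXint : Integrable (fun ω => frobSq (X ω)) P)
    (hYint : Integrable (fun ω => frobSq (Y ω)) P)
    (hHint : Integrable (fun ω => frobSq (H ω)) P)
    (hXtint : Integrable (fun ω => frobSq (Xtil ω)) P)
    (hcomp : ∫ ω, frobSq (X ω - Xtil ω) ∂P ≤ ωc * ∫ ω, frobSq (X ω - H ω) ∂P)
    (Xp : Ω → Matrix (Fin n) (Fin m) ℝ)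
    (hXp : ∀ ω, Xp ω = (1 - η • (1 - W)) * X ω - η • Y ω +
      η • ((1 - W) * (X ω - Xtil ω))) :
    ∫ ω, frobSq (Xp ω - X ω) ∂P ≤
      12 * ∫ ω, frobSq (X ω - rowAvg (X ω)) ∂P +
        3 * η ^ 2 * ∫ ω, frobSq (Y ω) ∂P +
        12 * η ^ 2 * ωc * ∫ ω, frobSq (X ω - H ω) ∂P := by
  have hWcol : ∀ j, ∑ i, W i j = 1 := by
    intro j
    have : ∑ i, W i j = ∑ i, W.transpose j i := by
      simp [Matrix.transpose_apply]
    rw [this, hWsymm, hWrow]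
  have hη2 : η ^ 2 ≤ 1 := by nlinarith
  -- pointwise bound
  have hpt : ∀ ω, frobSq (Xp ω - X ω) ≤
      12 * frobSq (X ω - rowAvg (X ω)) + 3 * η ^ 2 * frobSq (Y ω) +
      12 * η ^ 2 * frobSq (X ω - Xtil ω) := by
    intro ω
    have hdecomp : Xp ω - X ω =
        (-η) • ((1 - W) * X ω) + (-η) • Y ω + η • ((1 - W) * (X ω - Xtil ω)) := by
      rw [hXp, Matrix.sub_mul, Matrix.one_mul, Matrix.smul_mul]
      module
    have hA : frobSq ((-η) • ((1 - W) * X ω)) ≤ 4 * η ^ 2 * frobSq (X ω - rowAvg (X ω)) := by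
      rw [frobSq_smul, neg_pow]
      have heq : (1 - W) * X ω = (1 - W) * (X ω - rowAvg (X ω)) := by
        rw [Matrix.mul_sub, oneSubW_mul_rowAvg W hWrow, sub_zero]
      rw [heq]
      have := frobSq_oneSubW_mul W hWnn hWrow hWcol (X ω - rowAvg (X ω))
      nlinarith [frobSq_nonneg (X ω - rowAvg (X ω)), sq_nonneg η]
    have hB : frobSq ((-η) • Y ω) = η ^ 2 * frobSq (Y ω) := by
      rw [frobSq_smul]; ring
    have hC : frobSq (η • ((1 - W) * (X ω - Xtil ω))) ≤
        4 * η ^ 2 * frobSq (X ω - Xtil ω) := by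
      rw [frobSq_smul]
      have := frobSq_oneSubW_mul W hWnn hWrow hWcol (X ω - Xtil ω)
      nlinarith [sq_nonneg η]
    rw [hdecomp]
    have h3 := frobSq_add3_le ((-η) • ((1 - W) * X ω)) ((-η) • Y ω)
      (η • ((1 - W) * (X ω - Xtil ω)))
    have hXX : 0 ≤ frobSq (X ω - rowAvg (X ω)) := frobSq_nonneg _
    nlinarith [sq_nonneg η]
  -- measurability of matrix-entry-built functions
  have measXr : ∀ i j, Measurable fun ω => (X ω - rowAvg (X ω)) i j := by
    intro i j
    simp only [Matrix.sub_apply, rowAvg, Matrix.of_apply]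
    exact (hXmeas i j).sub ((measurable_const.mul (Finset.measurable_sum _ fun k _ => hXmeas k j)))
  have measXt : ∀ i j, Measurable fun ω => (X ω - Xtil ω) i j := by
    intro i j
    simp only [Matrix.sub_apply]
    exact (hXmeas i j).sub (hXtmeas i j)
  have frobMeas : ∀ (F : Ω → Matrix (Fin n) (Fin m) ℝ),
      (∀ i j, Measurable fun ω => F ω i j) → Measurable fun ω => frobSq (F ω) := by
    intro F hF
    unfold frobSq
    apply Finset.measurable_sum
    intro i _
    apply Finset.measurable_sum
    intro j _
    exact (hF i j).pow_const 2
  -- integrability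
  have intXr : Integrable (fun ω => frobSq (X ω - rowAvg (X ω))) P := by
    apply Integrable.mono' ((hXint.const_mul 2).add (hXint.const_mul 2))
      (frobMeas _ measXr).aestronglyMeasurable
    filter_upwards with ω
    rw [Real.norm_of_nonneg (frobSq_nonneg _)]
    calc frobSq (X ω - rowAvg (X ω)) ≤ 2 * frobSq (X ω) + 2 * frobSq (rowAvg (X ω)) :=
          frobSq_sub_le _ _
      _ ≤ 2 * frobSq (X ω) + 2 * frobSq (X ω) := by
          have := frobSq_rowAvg_le hn (X ω)
          linarith
  have intXt : Integrable (fun ω => frobSq (X ω - Xtil ω)) P := by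
    apply Integrable.mono' ((hXint.const_mul 2).add (hXtint.const_mul 2))
      (frobMeas _ measXt).aestronglyMeasurable
    filter_upwards with ω
    rw [Real.norm_of_nonneg (frobSq_nonneg _)]
    exact frobSq_sub_le _ _
  have intG : Integrable (fun ω => 12 * frobSq (X ω - rowAvg (X ω)) +
      3 * η ^ 2 * frobSq (Y ω) + 12 * η ^ 2 * frobSq (X ω - Xtil ω)) P :=
    ((intXr.const_mul 12).add (hYint.const_mul (3 * η ^ 2))).add (intXt.const_mul (12 * η ^ 2))
  have hmono : ∫ ω, frobSq (Xp ω - X ω) ∂P ≤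
      ∫ ω, (12 * frobSq (X ω - rowAvg (X ω)) + 3 * η ^ 2 * frobSq (Y ω) +
        12 * η ^ 2 * frobSq (X ω - Xtil ω)) ∂P := by
    apply integral_mono_of_nonneg
    · filter_upwards with ω
      exact frobSq_nonneg _
    · exact intG
    · filter_upwards with ω
      exact hpt ω
  have hsplit : ∫ ω, (12 * frobSq (X ω - rowAvg (X ω)) + 3 * η ^ 2 * frobSq (Y ω) +
        12 * η ^ 2 * frobSq (X ω - Xtil ω)) ∂P =
      12 * ∫ ω, frobSq (X ω - rowAvg (X ω)) ∂P +
      3 * η ^ 2 * ∫ ω, frobSq (Y ω) ∂P +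
      12 * η ^ 2 * ∫ ω, frobSq (X ω - Xtil ω) ∂P := by
    have hadd2 := integral_add (μ := P)
      ((intXr.const_mul 12).add (hYint.const_mul (3 * η ^ 2))) (intXt.const_mul (12 * η ^ 2))
    have hadd1 := integral_add (μ := P) (intXr.const_mul 12) (hYint.const_mul (3 * η ^ 2))
    simp only [Pi.add_apply] at hadd2 hadd1
    rw [hadd2, hadd1, integral_const_mul, integral_const_mul, integral_const_mul]
  have hlast : 12 * η ^ 2 * ∫ ω, frobSq (X ω - Xtil ω) ∂P ≤
      12 * η ^ 2 * ωc * ∫ ω, frobSq (X ω - H ω) ∂P := by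
    have h1 : 12 * η ^ 2 * ∫ ω, frobSq (X ω - Xtil ω) ∂P ≤
        12 * η ^ 2 * (ωc * ∫ ω, frobSq (X ω - H ω) ∂P) := by
      apply mul_le_mul_of_nonneg_left hcomp
      positivity
    linarith [h1]
  linarith [hmono, hsplit.le, hsplit.ge]
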